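/- Let G be a connected graph with adjacency matrix eigenvalues μ₁ ≥ ... ≥ μₙ and let κ be the smallest integer with μ₁ + Σ_{i=1}^κ μ_{n+1−i} ≤ 0. Then 1 + κ ≥ 1 + μ₁/|μₙ|, i.e., the Hoffman-sum bound implies the Hoffman ratio bound. -/
import Mathlib


open Matrix BigOperators

/-- with `κ` the smallest positive integer such that
`μ₁ + ∑_{i=1}^κ μ_{n+1-i} ≤ 0`, one has `1 + κ ≥ 1 + μ₁ / |μₙ|`: the Hoffman-sum bound
implies the Hoffman ratio bound. -/
theorem stmt9 {n : ℕ} (hn : 0 < n) (G : SimpleGraph (Fin n)) [DecidableRel G.Adj]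
    (hconn : G.Connected) (hedge : ∃ v w, G.Adj v w)
    (hA : (G.adjMatrix ℝ).IsHermitian)
    (μ : Fin n → ℝ) (σ : Equiv.Perm (Fin n))
    (hμ : μ = hA.eigenvalues ∘ σ) (hμanti : Antitone μ)
    (κ : ℕ) (hκpos : 0 < κ) (hκn : κ ≤ n)
    (hκ : μ ⟨0, hn⟩ + ∑ i ∈ Finset.range κ, μ ⟨n - 1 - i, by omega⟩ ≤ 0)
    (hκmin : ∀ k, 0 < k → k < κ →
      0 < μ ⟨0, hn⟩ + ∑ i ∈ Finset.range k, μ ⟨n - 1 - i, by omega⟩) :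
    1 + μ ⟨0, hn⟩ / |μ ⟨n - 1, by omega⟩| ≤ 1 + (κ : ℝ) := by
  set a : ℝ := μ ⟨n - 1, by omega⟩ with ha
  have hterm : ∀ i ∈ Finset.range κ, a ≤ μ ⟨n - 1 - i, by omega⟩ := by
    intro i _
    exact hμanti (Fin.mk_le_mk.mpr (by omega))
  have hsum : (κ : ℝ) * a ≤ ∑ i ∈ Finset.range κ, μ ⟨n - 1 - i, by omega⟩ := by
    calc (κ : ℝ) * a = ∑ _i ∈ Finset.range κ, a := by simp [mul_comm]
    _ ≤ _ := Finset.sum_le_sum hterm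
  have h1a : a ≤ μ ⟨0, hn⟩ := hμanti (by simp [Fin.le_def])
  rcases lt_trichotomy a 0 with hneg | hzero | hpos
  · have habs : |a| = -a := abs_of_neg hneg
    rw [habs]
    have hle : μ ⟨0, hn⟩ ≤ (κ : ℝ) * (-a) := by nlinarith
    have : μ ⟨0, hn⟩ / (-a) ≤ (κ : ℝ) :=
      (div_le_iff₀ (by linarith)).mpr (by linarith [hle])
    linarith
  · simp [hzero]
  · exfalso
    nlinarith
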